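/- arXiv:1808.04743 — 5 statements merged into one kernel-verified Lean document; each statement's English description precedes it below -/
import Mathlib

section
/- For positive integers D and real x with 0 < x < 1, the identity (-1)^{D/2} ∑_{ℓ=D/2+1}^∞ C(ℓ+D/2, D/2) C(ℓ-1, D/2) x^ℓ = (-1/(1-x)^{D+1}) ∑_{ℓ=D/2+1}^{D+1} (-1)^ℓ C(D+1, ℓ) x^ℓ holds, where D is even. -/
open Finset Polynomial fwdDiff

lemma bwd_sum (N : ℕ) (f : ℝ → ℝ) (y : ℝ) :
    ∑ j ∈ range (N + 1), (-1 : ℝ) ^ j * (N.choose j : ℝ) * f (y - j) =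
      (Δ_[(1 : ℝ)])^[N] f (y - N) := by
  induction N generalizing f y with
  | zero => simp
  | succ N ih =>
    rw [Function.iterate_succ_apply]
    have hy : y - ((N:ℝ) + 1) = (y - 1) - (N : ℕ) := by push_cast; ring
    push_cast
    rw [hy, ← ih (Δ_[(1:ℝ)] f) (y - 1)]
    have step : ∀ i ∈ range (N + 1),
        (-1 : ℝ) ^ (i+1) * ((N+1).choose (i+1) : ℝ) * f (y - ((i:ℝ)+1)) =
          ((-1 : ℝ) ^ (i+1) * (N.choose (i+1) : ℝ) * f (y - ((i:ℝ)+1)))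
          + (-1 : ℝ) * ((-1 : ℝ) ^ i * (N.choose i : ℝ) * f ((y - 1) - i)) := by
      intro i _
      have h1 : y - ((i:ℝ)+1) = (y - 1) - i := by ring
      rw [h1, Nat.choose_succ_succ]
      push_cast
      ring
    rw [Finset.sum_range_succ']
    push_cast
    rw [Finset.sum_congr rfl step, Finset.sum_add_distrib, ← Finset.mul_sum]
    have key : (∑ i ∈ range (N+1), (-1:ℝ)^(i+1) * (N.choose (i+1) : ℝ) * f (y - ((i:ℝ)+1)))
        + (-1:ℝ)^0 * (N.choose 0 : ℝ) * f (y - ((0:ℕ):ℝ)) =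
        ∑ j ∈ range (N+1), (-1:ℝ)^j * (N.choose j : ℝ) * f (y - j) := by
      have h2 := Finset.sum_range_succ' (fun j => (-1:ℝ)^j * (N.choose j : ℝ) * f (y - j)) (N+1)
      push_cast at h2 ⊢
      rw [← h2, Finset.sum_range_succ, Nat.choose_succ_self]
      push_cast
      ring
    have rhs : ∑ j ∈ range (N+1), (-1:ℝ)^j * (N.choose j:ℝ) * (Δ_[(1:ℝ)] f) ((y-1) - j) =
        (∑ j ∈ range (N+1), (-1:ℝ)^j * (N.choose j:ℝ) * f (y - j))
          - ∑ j ∈ range (N+1), (-1:ℝ)^j * (N.choose j:ℝ) * f ((y-1) - j) := by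
      rw [← Finset.sum_sub_distrib]
      refine Finset.sum_congr rfl fun j _ => ?_
      simp only [fwdDiff]
      have h3 : y - 1 - (j:ℝ) + 1 = y - j := by ring
      rw [h3]
      ring
    rw [rhs]
    simp only [Nat.choose_zero_right, pow_zero, Nat.cast_one, Nat.cast_zero, one_mul] at key ⊢
    linarith [key]

lemma fwdDiff_eval (P : Polynomial ℝ) :
    Δ_[(1:ℝ)] (fun t => P.eval t) = fun t => (P.comp (X + Polynomial.C 1) - P).eval t := by
  funext t
  simp [fwdDiff, Polynomial.eval_comp]

lemma iter_eval_zero (N : ℕ) : ∀ P : Polynomial ℝ, P.natDegree < N + 1 →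
    (Δ_[(1:ℝ)])^[N+1] (fun t => P.eval t) = fun _ => 0 := by
  induction N with
  | zero =>
    intro P hP
    have h0 : P = Polynomial.C (P.coeff 0) := Polynomial.eq_C_of_natDegree_le_zero (by omega)
    rw [h0]
    simp only [Polynomial.eval_C, Function.iterate_one]
    exact fwdDiff_const 1 (P.coeff 0)
  | succ N ih =>
    intro P hP
    rw [Function.iterate_succ_apply, fwdDiff_eval]
    set Q := P.comp (X + Polynomial.C 1) - P with hQdef
    apply ih
    by_cases hQ : Q = 0
    · rw [hQ]; simp
    · have hP0 : P ≠ 0 := by rintro rfl; simp [hQdef] at hQ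
      by_cases hd : P.natDegree = 0
      · exfalso
        apply hQ
        have h0 : P = Polynomial.C (P.coeff 0) := Polynomial.eq_C_of_natDegree_le_zero hd.le
        rw [hQdef, h0]
        simp
      · have h1 : (X + Polynomial.C (1:ℝ)).natDegree = 1 := Polynomial.natDegree_X_add_C 1
        have hcompdeg : (P.comp (X + Polynomial.C 1)).natDegree = P.natDegree := by
          rw [Polynomial.natDegree_comp, h1, mul_one]
        have hlc : (P.comp (X + Polynomial.C 1)).leadingCoeff = P.leadingCoeff := by
          rw [Polynomial.leadingCoeff_comp (by rw [h1]; exact one_ne_zero),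
            Polynomial.leadingCoeff_X_add_C, one_pow, mul_one]
        have hcomp0 : P.comp (X + Polynomial.C 1) ≠ 0 := by
          intro h
          rw [h, Polynomial.leadingCoeff_zero] at hlc
          exact hP0 (Polynomial.leadingCoeff_eq_zero.mp hlc.symm)
        have hdeg : Q.degree < (P.comp (X + Polynomial.C 1)).degree :=
          Polynomial.degree_sub_lt
            (by rw [Polynomial.degree_eq_natDegree hcomp0, Polynomial.degree_eq_natDegree hP0,
              hcompdeg]) hcomp0 hlc
        have h2 : Q.natDegree < P.natDegree := by
          have := Polynomial.natDegree_lt_natDegree hQ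
            (by rwa [Polynomial.degree_eq_natDegree hcomp0, hcompdeg,
              ← Polynomial.degree_eq_natDegree hP0] at hdeg)
          exact this
        omega

lemma fact_mul_choose (m k : ℕ) :
    (Nat.factorial m : ℝ) * ((k + m).choose m : ℝ) = ∏ i ∈ range m, ((k:ℝ) + 1 + i) := by
  induction m with
  | zero => simp
  | succ m ih =>
    rw [Finset.prod_range_succ, ← ih]
    have h := Nat.add_one_mul_choose_eq (k + m) m
    have hc : ((k + m + 1).choose (m + 1) : ℝ) * ((m:ℝ) + 1) =
        ((k:ℝ) + m + 1) * ((k + m).choose m : ℝ) := by exact_mod_cast congrArg Nat.cast h.symm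
    rw [show k + (m+1) = k + m + 1 from rfl]
    push_cast [Nat.factorial_succ]
    linear_combination (Nat.factorial m : ℝ) * hc

lemma prod_cast_fact (m : ℕ) : ∏ i ∈ range m, ((i:ℝ) + 1) = (Nat.factorial m : ℝ) := by
  rw [← Finset.prod_range_add_one_eq_factorial m]
  push_cast
  rfl

lemma prod_sub_nat (m : ℕ) : ∏ i ∈ range m, (m - i) = Nat.factorial m := by
  have h := Finset.prod_range_reflect (fun i => i + 1) m
  rw [Finset.prod_range_add_one_eq_factorial] at h
  rw [← h]
  refine Finset.prod_congr rfl fun i hi => ?_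
  simp only [Finset.mem_range] at hi
  omega

lemma prod_sub_m (m : ℕ) :
    ∏ i ∈ range m, ((i:ℝ) - m) = (-1:ℝ)^m * (Nat.factorial m : ℝ) := by
  have h1 : ∏ i ∈ range m, ((i:ℝ) - m) = ∏ i ∈ range m, (-1:ℝ) * ((m:ℝ) - i) := by
    refine Finset.prod_congr rfl fun i _ => ?_; ring
  rw [h1, Finset.prod_mul_distrib, Finset.prod_const, Finset.card_range]
  congr 1
  have h2 : ∀ i ∈ range m, (m:ℝ) - i = ((m - i : ℕ) : ℝ) := by
    intro i hi
    simp only [Finset.mem_range] at hi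
    rw [Nat.cast_sub hi.le]
  rw [Finset.prod_congr rfl h2, ← Nat.cast_prod, prod_sub_nat]

lemma core (m n : ℕ) :
    ∑ j ∈ range (n+1), (-1:ℝ)^j * ((2*m+1).choose j : ℝ) *
        (((n - j + 2*m + 1).choose m : ℝ) * ((n - j + m).choose m : ℝ)) =
      if n ≤ m then (-1:ℝ)^n * ((2*m+1).choose (n+m+1) : ℝ) else 0 := by
  have hfact : ((Nat.factorial m : ℝ))^2 ≠ 0 := by positivity
  set P : Polynomial ℝ := (∏ i ∈ range m, (Polynomial.X + Polynomial.C ((i:ℝ)+1))) *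
      (∏ i ∈ range m, (Polynomial.X + Polynomial.C ((m:ℝ)+2+i))) with hP
  have hdeg : P.natDegree < 2*m + 1 := by
    have h1 : (∏ i ∈ range m, (Polynomial.X + Polynomial.C ((i:ℝ)+1))).natDegree ≤ m := by
      refine le_trans (Polynomial.natDegree_prod_le _ _) ?_
      have : ∀ i ∈ range m, (Polynomial.X + Polynomial.C ((i:ℝ)+1)).natDegree = 1 :=
        fun i _ => Polynomial.natDegree_X_add_C _
      rw [Finset.sum_congr rfl this, Finset.sum_const, Finset.card_range, smul_eq_mul, mul_one]
    have h2 : (∏ i ∈ range m, (Polynomial.X + Polynomial.C ((m:ℝ)+2+i))).natDegree ≤ m := by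
      refine le_trans (Polynomial.natDegree_prod_le _ _) ?_
      have : ∀ i ∈ range m, (Polynomial.X + Polynomial.C ((m:ℝ)+2+i)).natDegree = 1 :=
        fun i _ => Polynomial.natDegree_X_add_C _
      rw [Finset.sum_congr rfl this, Finset.sum_const, Finset.card_range, smul_eq_mul, mul_one]
    have h3 := Polynomial.natDegree_mul_le (p := ∏ i ∈ range m, (Polynomial.X + Polynomial.C ((i:ℝ)+1)))
      (q := ∏ i ∈ range m, (Polynomial.X + Polynomial.C ((m:ℝ)+2+i)))
    rw [← hP] at h3
    omega
  have hEval : ∀ k : ℕ, P.eval (k : ℝ) =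
      (Nat.factorial m : ℝ)^2 * (((k + 2*m + 1).choose m : ℝ) * ((k + m).choose m : ℝ)) := by
    intro k
    have e1 := fact_mul_choose m k
    have e2 := fact_mul_choose m (k + m + 1)
    have hidx : k + m + 1 + m = k + 2*m + 1 := by omega
    rw [hidx] at e2
    push_cast at e2
    rw [hP, Polynomial.eval_mul, Polynomial.eval_prod, Polynomial.eval_prod]
    simp only [Polynomial.eval_add, Polynomial.eval_X, Polynomial.eval_C]
    have c1 : ∏ i ∈ range m, ((k:ℝ) + ((i:ℝ)+1)) = ∏ i ∈ range m, ((k:ℝ) + 1 + i) :=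
      Finset.prod_congr rfl (fun i _ => by ring)
    have c2 : ∏ i ∈ range m, ((k:ℝ) + ((m:ℝ)+2+i)) = ∏ i ∈ range m, ((k:ℝ) + (m:ℝ) + 1 + 1 + i) :=
      Finset.prod_congr rfl (fun i _ => by ring)
    rw [c1, c2, ← e1, ← e2]
    ring
  have hNeg : P.eval (-((m:ℝ)+1)) = (-1:ℝ)^m * (Nat.factorial m : ℝ)^2 := by
    rw [hP, Polynomial.eval_mul, Polynomial.eval_prod, Polynomial.eval_prod]
    simp only [Polynomial.eval_add, Polynomial.eval_X, Polynomial.eval_C]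
    have c1 : ∏ i ∈ range m, (-((m:ℝ)+1) + ((i:ℝ)+1)) = ∏ i ∈ range m, ((i:ℝ) - m) :=
      Finset.prod_congr rfl (fun i _ => by ring)
    have c2 : ∏ i ∈ range m, (-((m:ℝ)+1) + ((m:ℝ)+2+i)) = ∏ i ∈ range m, ((i:ℝ) + 1) :=
      Finset.prod_congr rfl (fun i _ => by ring)
    rw [c1, c2, prod_sub_m, prod_cast_fact]
    ring
  have hPneg : ∀ j : ℕ, n < j → j < 2*m + 2 → j ≠ n + m + 1 → P.eval ((n:ℝ) - j) = 0 := by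
    intro j h1 h2 h3
    rw [hP, Polynomial.eval_mul, Polynomial.eval_prod, Polynomial.eval_prod]
    simp only [Polynomial.eval_add, Polynomial.eval_X, Polynomial.eval_C]
    rcases lt_or_ge (j - n) (m+1) with h | h
    · apply mul_eq_zero_of_left
      refine Finset.prod_eq_zero (Finset.mem_range.mpr (show j - n - 1 < m by omega)) ?_
      have h4 : ((j - n - 1 : ℕ) : ℝ) = (j:ℝ) - n - 1 := by
        rw [Nat.sub_sub, Nat.cast_sub (by omega)]
        push_cast
        ring
      rw [h4]
      ring
    · apply mul_eq_zero_of_right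
      refine Finset.prod_eq_zero (Finset.mem_range.mpr (show j - n - (m+2) < m by omega)) ?_
      have h4 : ((j - n - (m+2) : ℕ) : ℝ) = (j:ℝ) - n - m - 2 := by
        rw [Nat.sub_sub, Nat.cast_sub (by omega)]
        push_cast
        ring
      rw [h4]
      ring
  have hiter := iter_eval_zero (2*m) P hdeg
  have hiter' : (Δ_[(1:ℝ)])^[2*m+1] (fun t => P.eval t) ((n:ℝ) - ((2*m+1 : ℕ):ℝ)) = 0 := by
    rw [hiter]
  have hstar := bwd_sum (2*m+1) (fun t => P.eval t) (n : ℝ)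
  rw [hiter'] at hstar
  apply mul_left_cancel₀ hfact
  rw [Finset.mul_sum]
  have hterm : ∀ j ∈ range (n+1),
      (Nat.factorial m:ℝ)^2 * ((-1:ℝ)^j * ((2*m+1).choose j : ℝ) *
          (((n - j + 2*m + 1).choose m : ℝ) * ((n - j + m).choose m : ℝ)))
        = (-1:ℝ)^j * ((2*m+1).choose j : ℝ) * P.eval ((n:ℝ) - j) := by
    intro j hj
    simp only [Finset.mem_range] at hj
    have hc : ((n - j : ℕ) : ℝ) = (n:ℝ) - j := Nat.cast_sub (by omega)
    rw [← hc, hEval (n - j)]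
    ring
  rw [Finset.sum_congr rfl hterm]
  by_cases hnm : 2*m + 1 ≤ n
  · rw [if_neg (by omega), mul_zero]
    rw [← Finset.sum_subset (Finset.range_subset_range.mpr (show 2*m+1+1 ≤ n+1 by omega))
      (fun j _ hj => by
        have : 2*m+1 < j := by simpa [Finset.mem_range] using hj
        rw [Nat.choose_eq_zero_of_lt this]
        push_cast
        ring)]
    exact hstar
  · have hsplit : ∑ j ∈ range (2*m+1+1), (-1:ℝ)^j * ((2*m+1).choose j : ℝ) * P.eval ((n:ℝ) - j)
        = (∑ j ∈ range (n+1), (-1:ℝ)^j * ((2*m+1).choose j : ℝ) * P.eval ((n:ℝ) - j))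
          + ∑ j ∈ Finset.Ico (n+1) (2*m+2), (-1:ℝ)^j * ((2*m+1).choose j : ℝ) * P.eval ((n:ℝ) - j) := by
      rw [show 2*m+1+1 = 2*m+2 from by omega, Finset.range_eq_Ico,
        ← Finset.sum_Ico_consecutive _ (Nat.zero_le (n+1)) (show n+1 ≤ 2*m+2 by omega),
        ← Finset.range_eq_Ico]
    rw [hsplit] at hstar
    by_cases hnm2 : n ≤ m
    · rw [if_pos hnm2]
      have hmem : n + m + 1 ∈ Finset.Ico (n+1) (2*m+2) := by
        simp only [Finset.mem_Ico]
        omega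
      have hval : P.eval ((n:ℝ) - ((n+m+1 : ℕ):ℝ)) = (-1:ℝ)^m * (Nat.factorial m : ℝ)^2 := by
        have : (n:ℝ) - ((n+m+1 : ℕ):ℝ) = -((m:ℝ)+1) := by push_cast; ring
        rw [this, hNeg]
      have htail : ∑ j ∈ Finset.Ico (n+1) (2*m+2), (-1:ℝ)^j * ((2*m+1).choose j : ℝ) * P.eval ((n:ℝ) - j)
          = (-1:ℝ)^(n+m+1) * ((2*m+1).choose (n+m+1) : ℝ) * ((-1:ℝ)^m * (Nat.factorial m : ℝ)^2) := by
        rw [Finset.sum_eq_single_of_mem _ hmem (fun j hj hne => by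
          simp only [Finset.mem_Ico] at hj
          rw [hPneg j (by omega) (by omega) hne, mul_zero]), hval]
      rw [htail] at hstar
      have hsgn : (-1:ℝ)^(n+m+1) * (-1:ℝ)^m = -(-1:ℝ)^n := by
        rw [← pow_add, show n+m+1+m = 2*m + (n+1) by omega, pow_add, pow_mul, neg_one_sq,
          one_pow, pow_succ]
        ring
      linear_combination hstar - ((2*m+1).choose (n+m+1) : ℝ) * (Nat.factorial m:ℝ)^2 * hsgn
    · rw [if_neg hnm2, mul_zero]
      have htail0 : ∑ j ∈ Finset.Ico (n+1) (2*m+2), (-1:ℝ)^j * ((2*m+1).choose j : ℝ) * P.eval ((n:ℝ) - j) = 0 := by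
        refine Finset.sum_eq_zero fun j hj => ?_
        simp only [Finset.mem_Ico] at hj
        rw [hPneg j (by omega) (by omega) (by omega), mul_zero]
      rw [htail0, add_zero] at hstar
      exact hstar

set_option maxHeartbeats 1000000 in
lemma summable_aux (m : ℕ) {x : ℝ} (hx0 : 0 < x) (hx1 : x < 1) :
    Summable (fun n : ℕ => ‖(((n + 2*m + 1).choose m : ℝ) * ((n + m).choose m : ℝ)) * x^n‖) := by
  have hg : Summable (fun n : ℕ => ((n:ℝ)+1)^(2*m) * x^n) := by
    have h0 : Summable (fun n : ℕ => (n:ℝ)^(2*m) * x^n) :=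
      summable_pow_mul_geometric_of_norm_lt_one (2*m)
        (by rw [Real.norm_eq_abs, abs_of_pos hx0]; exact hx1)
    have h1 : Summable (fun n : ℕ => (((n+1:ℕ)):ℝ)^(2*m) * x^(n+1)) :=
      (summable_nat_add_iff 1).mpr h0
    have h2 : Summable (fun n : ℕ => x * (((n:ℝ)+1)^(2*m) * x^n)) := by
      refine h1.congr fun n => ?_
      push_cast
      ring
    exact (summable_mul_left_iff hx0.ne').mp h2
  refine Summable.of_nonneg_of_le (fun n => norm_nonneg _) ?_
    (hg.mul_left (((2*m+2)^m * (m+1)^m : ℕ) : ℝ))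
  intro n
  have hb1 : n + 2*m + 1 ≤ (2*m+2)*(n+1) := by
    have h : (2*m+2)*(n+1) = 2*m*n + (n + 2*m + 1) + (n+1) := by ring
    rw [h]
    exact le_trans (Nat.le_add_left _ _) (Nat.le_add_right _ _)
  have hb2 : n + m ≤ (m+1)*(n+1) := by
    have h : (m+1)*(n+1) = m*n + (n + m) + 1 := by ring
    rw [h]
    exact le_trans (Nat.le_add_left _ _) (Nat.le_add_right _ _)
  have hnat : ((n + 2*m + 1).choose m) * ((n + m).choose m)
      ≤ (2*m+2)^m * (m+1)^m * (n+1)^(2*m) := by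
    calc ((n + 2*m + 1).choose m) * ((n + m).choose m)
        ≤ (n+2*m+1)^m * ((n+m)^m) :=
          Nat.mul_le_mul (Nat.choose_le_pow _ _) (Nat.choose_le_pow _ _)
      _ ≤ ((2*m+2)*(n+1))^m * (((m+1)*(n+1))^m) :=
          Nat.mul_le_mul (Nat.pow_le_pow_left hb1 m) (Nat.pow_le_pow_left hb2 m)
      _ = (2*m+2)^m * (m+1)^m * (n+1)^(2*m) := by rw [Nat.mul_pow, Nat.mul_pow]; ring
  have hcast : (((n + 2*m + 1).choose m : ℝ) * ((n + m).choose m : ℝ))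
      ≤ (((2*m+2)^m * (m+1)^m : ℕ) : ℝ) * ((n:ℝ)+1)^(2*m) := by
    exact_mod_cast hnat
  rw [Real.norm_eq_abs, abs_of_nonneg (by positivity)]
  calc (((n + 2*m + 1).choose m : ℝ) * ((n + m).choose m : ℝ)) * x^n
      ≤ ((((2*m+2)^m * (m+1)^m : ℕ) : ℝ) * ((n:ℝ)+1)^(2*m)) * x^n :=
        mul_le_mul_of_nonneg_right hcast (by positivity)
    _ = (((2*m+2)^m * (m+1)^m : ℕ) : ℝ) * (((n:ℝ)+1)^(2*m) * x^n) := by ring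

theorem stmt_6 (D : ℕ) (hD : 0 < D) (hEven : Even D) (x : ℝ) (hx0 : 0 < x) (hx1 : x < 1) :
    (-1 : ℝ) ^ (D / 2) *
      (∑' n : ℕ,
        (Nat.choose ((n + D / 2 + 1) + D / 2) (D / 2) : ℝ) *
          (Nat.choose (n + D / 2) (D / 2) : ℝ) * x ^ (n + D / 2 + 1)) =
    (-1 / (1 - x) ^ (D + 1)) *
      ∑ ℓ ∈ Finset.Icc (D / 2 + 1) (D + 1),
        (-1 : ℝ) ^ ℓ * (Nat.choose (D + 1) ℓ : ℝ) * x ^ ℓ := by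
  obtain ⟨m, hm⟩ := hEven
  have hD2 : D / 2 = m := by omega
  have hD1 : D + 1 = 2 * m + 1 := by omega
  simp only [hD2, hD1]
  have h1x0 : (1 : ℝ) - x ≠ 0 := by linarith
  have h1x : (1 - x) ^ (2 * m + 1) ≠ 0 := pow_ne_zero _ h1x0
  have hax := summable_aux m hx0 hx1
  -- Step 1: LHS tsum
  have hL : (∑' n : ℕ, ((n + m + 1 + m).choose m : ℝ) * ((n + m).choose m : ℝ) * x ^ (n + m + 1))
      = (∑' n : ℕ, (((n + 2*m + 1).choose m : ℝ) * ((n + m).choose m : ℝ)) * x ^ n) * x ^ (m+1) := by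
    rw [← tsum_mul_right]
    refine tsum_congr fun n => ?_
    rw [show n + m + 1 + m = n + 2*m + 1 by omega, show n + m + 1 = n + (m+1) by omega, pow_add]
    ring
  -- Step 2: the geometric-polynomial factor
  have hvanish : ∀ j ∉ range (2*m+1+1), (-1:ℝ)^j * ((2*m+1).choose j : ℝ) * x^j = 0 := by
    intro j hj
    simp only [Finset.mem_range] at hj
    rw [Nat.choose_eq_zero_of_lt (by omega)]
    push_cast
    ring
  have hbnorm : Summable fun j : ℕ => ‖(-1:ℝ)^j * ((2*m+1).choose j : ℝ) * x^j‖ :=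
    summable_of_ne_finset_zero (s := range (2*m+1+1)) (fun j hj => by rw [hvanish j hj, norm_zero])
  have hbsum : ∑' j : ℕ, (-1:ℝ)^j * ((2*m+1).choose j : ℝ) * x^j = (1-x)^(2*m+1) := by
    rw [tsum_eq_sum hvanish, show (1:ℝ) - x = -x + 1 by ring, add_pow]
    refine Finset.sum_congr rfl fun j hj => ?_
    rw [one_pow, neg_pow]
    ring
  -- Step 3: Cauchy product
  have hprod : (∑' n : ℕ, (((n + 2*m + 1).choose m : ℝ) * ((n + m).choose m : ℝ)) * x ^ n)
        * (1-x)^(2*m+1)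
      = ∑' n : ℕ, ((if n ≤ m then (-1:ℝ)^n * ((2*m+1).choose (n+m+1) : ℝ) else 0) * x^n) := by
    rw [← hbsum, tsum_mul_tsum_eq_tsum_sum_range_of_summable_norm hax hbnorm]
    refine tsum_congr fun n => ?_
    have hstep : ∀ k ∈ range (n+1),
        ((((k + 2*m + 1).choose m : ℝ) * ((k + m).choose m : ℝ)) * x^k)
            * ((-1:ℝ)^(n-k) * ((2*m+1).choose (n-k) : ℝ) * x^(n-k))
          = ((-1:ℝ)^(n-k) * ((2*m+1).choose (n-k) : ℝ) *
              (((n - (n-k) + 2*m + 1).choose m : ℝ) * ((n - (n-k) + m).choose m : ℝ))) * x^n := by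
      intro k hk
      simp only [Finset.mem_range] at hk
      have hxp : x^k * x^(n-k) = x^n := by rw [← pow_add]; congr 1; omega
      rw [show n - (n - k) = k by omega, ← hxp]
      ring
    rw [Finset.sum_congr rfl hstep, ← Finset.sum_mul]
    congr 1
    have hrefl := Finset.sum_range_reflect (fun j => (-1:ℝ)^j * ((2*m+1).choose j : ℝ) *
      (((n - j + 2*m + 1).choose m : ℝ) * ((n - j + m).choose m : ℝ))) (n+1)
    simp only [Nat.add_sub_cancel] at hrefl
    rw [hrefl, core m n]
  -- Step 4: tsum of the finitely supported series
  have hQ : ∑' n : ℕ, ((if n ≤ m then (-1:ℝ)^n * ((2*m+1).choose (n+m+1) : ℝ) else 0) * x^n)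
      = ∑ n ∈ range (m+1), (-1:ℝ)^n * ((2*m+1).choose (n+m+1) : ℝ) * x^n := by
    rw [tsum_eq_sum (s := range (m+1)) (fun n hn => by
      simp only [Finset.mem_range] at hn
      rw [if_neg (by omega), zero_mul])]
    refine Finset.sum_congr rfl fun n hn => ?_
    simp only [Finset.mem_range] at hn
    rw [if_pos (by omega)]
  -- Step 5: RHS finite sum reindex
  have hR : ∑ ℓ ∈ Finset.Icc (m+1) (2*m+1), (-1:ℝ)^ℓ * ((2*m+1).choose ℓ : ℝ) * x^ℓ
      = (-1:ℝ)^(m+1) * x^(m+1) *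
          ∑ n ∈ range (m+1), (-1:ℝ)^n * ((2*m+1).choose (n+m+1) : ℝ) * x^n := by
    rw [← Finset.Ico_add_one_right_eq_Icc, Finset.sum_Ico_eq_sum_range,
      show 2*m+1+1 - (m+1) = m+1 by omega, Finset.mul_sum]
    refine Finset.sum_congr rfl fun k hk => ?_
    rw [show m+1+k = k+(m+1) by omega, pow_add, pow_add, show k+(m+1) = k+m+1 by omega]
    ring
  rw [hL, hR, ← hQ, ← hprod]
  field_simp
  ring
end

section
/- Let D be a positive even integer and let B_{2m}, 1 ≤ m ≤ D/2, be the unique solution of the Vandermonde system ∑_{m=1}^{D/2} (-1)^m ℓ^{2m} B_{2m} = -1 for ℓ = 1, ..., D/2. Then B_2 = ∑_{m=1}^{D/2} 1/m². -/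
open Polynomial Finset

lemma stmt8_aux (c : ℕ → ℝ) (s : Finset ℕ) :
    (∏ ℓ ∈ s, (1 - Polynomial.C (c ℓ) * Polynomial.X)).coeff 1 = ∑ ℓ ∈ s, -(c ℓ) := by
  classical
  induction s using Finset.induction with
  | empty => simp [Polynomial.coeff_one]
  | insert _ _ h ih =>
    rename_i a s
    rw [Finset.prod_insert h, Finset.sum_insert h, coeff_mul,
      Finset.Nat.sum_antidiagonal_eq_sum_range_succ_mk, Finset.sum_range_succ,
      Finset.sum_range_succ, Finset.sum_range_zero]
    have hq0 : (∏ ℓ ∈ s, (1 - C (c ℓ) * X)).coeff 0 = 1 := by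
      rw [coeff_zero_eq_eval_zero, eval_prod]
      exact Finset.prod_eq_one fun x _ => by simp
    have e0 : (1 - C (c a) * X).coeff 0 = 1 := by simp [Polynomial.coeff_one]
    have e1 : (1 - C (c a) * X).coeff 1 = -(c a) := by simp [Polynomial.coeff_one]
    rw [hq0, ih, e0, e1]
    ring

theorem stmt_8 (D : ℕ) (hD : 0 < D) (hEven : Even D) (B : ℕ → ℝ)
    (hB : ∀ ℓ ∈ Finset.Icc 1 (D / 2),
      ∑ m ∈ Finset.Icc 1 (D / 2), (-1 : ℝ) ^ m * (ℓ : ℝ) ^ (2 * m) * B m = -1) :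
    B 1 = ∑ m ∈ Finset.Icc 1 (D / 2), 1 / (m : ℝ) ^ 2 := by
  set n := D / 2 with hn
  have hn1 : 1 ≤ n := by
    rcases hEven with ⟨k, hk⟩
    omega
  set p : ℝ[X] :=
      ((∑ m ∈ Icc 1 n, C ((-1 : ℝ) ^ m * B m) * X ^ m) + 1)
      - ∏ ℓ ∈ Icc 1 n, (1 - C (((ℓ : ℝ) ^ 2)⁻¹) * X) with hp
  have hsq_ne : ∀ ℓ ∈ Icc 1 n, ((ℓ : ℝ) ^ 2) ≠ 0 := by
    intro ℓ hℓ
    have : (1 : ℕ) ≤ ℓ := (mem_Icc.mp hℓ).1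
    positivity
  have heval_sq : ∀ ℓ ∈ Icc 1 n, p.eval ((ℓ : ℝ) ^ 2) = 0 := by
    intro ℓ hℓ
    have h1 : (∏ x ∈ Icc 1 n, (1 - C (((x : ℝ) ^ 2)⁻¹) * X)).eval ((ℓ : ℝ) ^ 2) = 0 := by
      rw [eval_prod]
      refine Finset.prod_eq_zero hℓ ?_
      simp [inv_mul_cancel₀ (hsq_ne ℓ hℓ)]
    have h2 : (∑ m ∈ Icc 1 n, C ((-1 : ℝ) ^ m * B m) * X ^ m).eval ((ℓ : ℝ) ^ 2) = -1 := by
      calc (∑ m ∈ Icc 1 n, C ((-1 : ℝ) ^ m * B m) * X ^ m).eval ((ℓ : ℝ) ^ 2)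
          = ∑ m ∈ Icc 1 n, (-1 : ℝ) ^ m * (ℓ : ℝ) ^ (2 * m) * B m := by
            rw [eval_finset_sum]
            refine Finset.sum_congr rfl fun m hm => ?_
            rw [eval_mul, eval_C, eval_pow, eval_X, ← pow_mul]
            ring
        _ = -1 := hB ℓ hℓ
    rw [hp, eval_sub, eval_add, h2, h1, eval_one]
    ring
  have heval0 : p.eval 0 = 0 := by
    have h1 : (∏ x ∈ Icc 1 n, (1 - C (((x : ℝ) ^ 2)⁻¹) * X)).eval 0 = 1 := by
      rw [eval_prod]
      refine Finset.prod_eq_one fun x hx => by simp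
    have h2 : (∑ m ∈ Icc 1 n, C ((-1 : ℝ) ^ m * B m) * X ^ m).eval 0 = 0 := by
      rw [eval_finset_sum]
      refine Finset.sum_eq_zero fun m hm => ?_
      have : 1 ≤ m := (mem_Icc.mp hm).1
      simp [zero_pow (by omega : m ≠ 0)]
    rw [hp, eval_sub, eval_add, h2, h1, eval_one]
    ring
  set s : Finset ℝ := insert 0 ((Icc 1 n).image fun ℓ : ℕ => ((ℓ : ℝ)) ^ 2) with hs
  have hcard : #s = n + 1 := by
    rw [hs, Finset.card_insert_of_notMem, Finset.card_image_of_injOn]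
    · simp
    · intro a ha b hb hab
      have hab0 : ((a : ℝ)) ^ 2 = ((b : ℝ)) ^ 2 := hab
      have hab' : a ^ 2 = b ^ 2 := by exact_mod_cast hab0
      exact Nat.pow_left_injective (by norm_num) hab'
    · simp only [Finset.mem_image, not_exists]
      intro a hcon
      exact hsq_ne a hcon.1 hcon.2
  have hdeg : p.natDegree < #s := by
    rw [hcard]
    have hd1 : ((∑ m ∈ Icc 1 n, C ((-1 : ℝ) ^ m * B m) * X ^ m) + 1).natDegree ≤ n := by
      refine natDegree_add_le_of_degree_le ?_ ?_
      · refine natDegree_sum_le_of_forall_le _ _ fun m hm => ?_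
        calc (C ((-1 : ℝ) ^ m * B m) * X ^ m).natDegree ≤ m :=
              natDegree_C_mul_le _ _ |>.trans (by simp)
          _ ≤ n := (mem_Icc.mp hm).2
      · simp
    have hd2 : (∏ ℓ ∈ Icc 1 n, (1 - C (((ℓ : ℝ) ^ 2)⁻¹) * X)).natDegree ≤ n := by
      refine (natDegree_prod_le _ _).trans ?_
      calc ∑ ℓ ∈ Icc 1 n, (1 - C (((ℓ : ℝ) ^ 2)⁻¹) * X).natDegree
          ≤ ∑ ℓ ∈ Icc 1 n, 1 := by
            refine Finset.sum_le_sum fun ℓ hℓ => ?_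
            refine (natDegree_sub_le _ _).trans ?_
            simp only [natDegree_one, max_le_iff]
            exact ⟨Nat.zero_le _, natDegree_C_mul_le _ _ |>.trans (by simp)⟩
        _ = n := by simp
    calc p.natDegree ≤ max _ _ := natDegree_sub_le _ _
      _ ≤ n := max_le hd1 hd2
      _ < n + 1 := Nat.lt_succ_self n
  have hp0 : p = 0 := by
    refine Polynomial.eq_zero_of_natDegree_lt_card_of_eval_eq_zero' p s ?_ hdeg
    intro x hx
    rw [hs] at hx
    rcases Finset.mem_insert.mp hx with rfl | hx
    · exact heval0
    · obtain ⟨ℓ, hℓ, rfl⟩ := Finset.mem_image.mp hx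
      exact heval_sq ℓ hℓ
  have hc : p.coeff 1 = 0 := by rw [hp0]; simp
  have hcsum : (∑ m ∈ Icc 1 n, C ((-1 : ℝ) ^ m * B m) * X ^ m).coeff 1 = -B 1 := by
    rw [finset_sum_coeff, Finset.sum_eq_single 1]
    · rw [coeff_C_mul, coeff_X_pow, if_pos rfl]
      ring
    · intro m hm hm1
      rw [coeff_C_mul, coeff_X_pow, if_neg (Ne.symm hm1), mul_zero]
    · intro h1
      exact absurd (mem_Icc.mpr ⟨le_refl 1, hn1⟩) h1
  have hcprod : (∏ ℓ ∈ Icc 1 n, (1 - C (((ℓ : ℝ) ^ 2)⁻¹) * X)).coeff 1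
      = ∑ ℓ ∈ Icc 1 n, -(((ℓ : ℝ) ^ 2)⁻¹) := stmt8_aux (fun ℓ => ((ℓ : ℝ) ^ 2)⁻¹) _
  have hkey := hc
  rw [hp, coeff_sub, coeff_add, hcsum, hcprod, Polynomial.coeff_one,
    Finset.sum_neg_distrib] at hkey
  have hB1 : B 1 = ∑ ℓ ∈ Icc 1 n, ((ℓ : ℝ) ^ 2)⁻¹ := by
    norm_num at hkey
    linarith
  rw [hB1]
  exact Finset.sum_congr rfl fun m hm => (one_div _).symm
end

section
/- Suppose v is 2π-periodic, analytic, and satisfies |v(θ)| ≤ M in the half-plane Im θ > -a for some a > 0. Then the trapezoidal rule I_N = (2π/N) ∑_{j=1}^N v(2πj/N) satisfies |I_N - I| ≤ 2πM/(e^{aN} - 1), where I = ∫₀^{2π} v(θ) dθ. -/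
open Complex Real Set
open scoped Interval

lemma aux_shift (a : ℝ) (ha : 0 < a) (g : ℂ → ℂ)
    (hg : ∀ z : ℂ, -a < z.im → DifferentiableAt ℂ g z)
    (hper : ∀ z : ℂ, -a < z.im → g (z + 2 * Real.pi) = g z)
    (y : ℝ) (hy : -a < y) :
    (∫ x in (0:ℝ)..(2*Real.pi), g (x + y * Complex.I)) =
      ∫ x in (0:ℝ)..(2*Real.pi), g x := by
  set w : ℂ := Complex.mk (2 * Real.pi) y with hw
  have hre : w.re = 2 * Real.pi := rfl
  have him : w.im = y := rfl
  have H : DifferentiableOn ℂ g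
      ((Set.uIcc (0:ℂ).re w.re) ×ℂ (Set.uIcc (0:ℂ).im w.im)) := by
    intro z hz
    refine (hg z ?_).differentiableWithinAt
    have h2 : z.im ∈ Set.uIcc (0:ℝ) y := hz.2
    rcases le_total 0 y with h | h
    · rw [uIcc_of_le h] at h2; linarith [h2.1, ha]
    · rw [uIcc_of_ge h] at h2; linarith [h2.1]
  have key := Complex.integral_boundary_rect_eq_zero_of_differentiableOn g 0 w H
  rw [hre, him] at key
  simp only [Complex.zero_re, Complex.zero_im, Complex.ofReal_zero, zero_mul, add_zero,
    zero_add] at key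
  have hvert : (∫ t in (0:ℝ)..y, g (((2 * Real.pi : ℝ) : ℂ) + t * Complex.I)) =
      ∫ t in (0:ℝ)..y, g (t * Complex.I) := by
    apply intervalIntegral.integral_congr
    intro t ht
    have htim : -a < ((t:ℂ) * Complex.I).im := by
      simp only [Complex.mul_I_im, Complex.ofReal_re]
      rcases le_total 0 y with h | h
      · rw [uIcc_of_le h] at ht; linarith [ht.1, ha]
      · rw [uIcc_of_ge h] at ht; linarith [ht.1]
    have hp := hper ((t:ℂ) * Complex.I) htim
    show g (((2 * Real.pi : ℝ) : ℂ) + t * Complex.I) = g (t * Complex.I)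
    rw [← hp]
    congr 1
    push_cast; ring
  rw [hvert] at key
  have := sub_eq_zero.mp key
  linear_combination (-1 : ℂ) * this

lemma aux_J (a M : ℝ) (ha : 0 < a) (v : ℂ → ℂ)
    (hvd : ∀ z : ℂ, -a < z.im → DifferentiableAt ℂ v z)
    (hper : ∀ θ : ℂ, -a < θ.im → v (θ + 2 * Real.pi) = v θ)
    (hbd : ∀ θ : ℂ, -a < θ.im → ‖v θ‖ ≤ M)
    (k : ℤ) (y : ℝ) (hy : -a < y) :
    ‖∫ x in (0:ℝ)..(2*Real.pi), v x * Complex.exp (-(k:ℂ) * Complex.I * x)‖ ≤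
      2 * Real.pi * M * Real.exp (k * y) := by
  set g : ℂ → ℂ := fun θ => v θ * Complex.exp (-(k:ℂ) * Complex.I * θ) with hg
  have hgd : ∀ z : ℂ, -a < z.im → DifferentiableAt ℂ g z := by
    intro z hz
    exact (hvd z hz).mul (by fun_prop)
  have hgper : ∀ z : ℂ, -a < z.im → g (z + 2 * Real.pi) = g z := by
    intro z hz
    simp only [hg]
    rw [hper z hz]
    congr 1
    rw [show -(k:ℂ) * Complex.I * (z + 2 * Real.pi)
        = -(k:ℂ) * Complex.I * z + (-k : ℤ) * (2 * Real.pi * Complex.I) by push_cast; ring,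
      Complex.exp_add, Complex.exp_int_mul_two_pi_mul_I, mul_one]
  have hshift := aux_shift a ha g hgd hgper y hy
  have : (∫ x in (0:ℝ)..(2*Real.pi), v x * Complex.exp (-(k:ℂ) * Complex.I * x)) =
      ∫ x in (0:ℝ)..(2*Real.pi), g (x + y * Complex.I) := hshift.symm
  rw [this]
  have hbound : ∀ x ∈ Set.uIoc (0:ℝ) (2*Real.pi), ‖g (x + y * Complex.I)‖ ≤ M * Real.exp (k * y) := by
    intro x _
    have him : ((x:ℂ) + y * Complex.I).im = y := by simp
    rw [hg]
    simp only [norm_mul]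
    have h1 : ‖v ((x:ℂ) + y * Complex.I)‖ ≤ M := hbd _ (by rw [him]; exact hy)
    have h2 : ‖Complex.exp (-(k:ℂ) * Complex.I * ((x:ℂ) + y * Complex.I))‖ = Real.exp (k * y) := by
      rw [Complex.norm_exp]
      congr 1
      simp [Complex.mul_re, Complex.mul_im]
    rw [h2]
    exact mul_le_mul_of_nonneg_right h1 (Real.exp_nonneg _)
  have := intervalIntegral.norm_integral_le_of_norm_le_const
    (C := M * Real.exp (k * y)) (fun x hx => hbound x hx)
  calc ‖∫ x in (0:ℝ)..(2*Real.pi), g (x + y * Complex.I)‖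
      ≤ M * Real.exp (k * y) * |2*Real.pi - 0| := this
    _ = 2 * Real.pi * M * Real.exp (k * y) := by
        rw [sub_zero, abs_of_pos (by positivity)]; ring

lemma aux_c_bound (a M : ℝ) (ha : 0 < a) (v : ℂ → ℂ)
    (hvd : ∀ z : ℂ, -a < z.im → DifferentiableAt ℂ v z)
    (hper : ∀ θ : ℂ, -a < θ.im → v (θ + 2 * Real.pi) = v θ)
    (hbd : ∀ θ : ℂ, -a < θ.im → ‖v θ‖ ≤ M)
    (k : ℤ) (hk : 0 ≤ k) :
    ‖∫ x in (0:ℝ)..(2*Real.pi), v x * Complex.exp (-(k:ℂ) * Complex.I * x)‖ ≤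
      2 * Real.pi * M * Real.exp (-(a * k)) := by
  have hcont : Filter.Tendsto (fun y : ℝ => 2 * Real.pi * M * Real.exp (k * y))
      (nhdsWithin (-a) (Set.Ioi (-a))) (nhds (2 * Real.pi * M * Real.exp (-(a * k)))) := by
    have : Continuous (fun y : ℝ => 2 * Real.pi * M * Real.exp (k * y)) := by continuity
    have h := (this.tendsto (-a)).mono_left
      (nhdsWithin_le_nhds (s := Set.Ioi (-a)))
    convert h using 2
    ring_nf
  refine ge_of_tendsto hcont ?_
  filter_upwards [self_mem_nhdsWithin] with y hy
  exact aux_J a M ha v hvd hper hbd k y hy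

lemma aux_c_zero (a M : ℝ) (ha : 0 < a) (v : ℂ → ℂ)
    (hvd : ∀ z : ℂ, -a < z.im → DifferentiableAt ℂ v z)
    (hper : ∀ θ : ℂ, -a < θ.im → v (θ + 2 * Real.pi) = v θ)
    (hbd : ∀ θ : ℂ, -a < θ.im → ‖v θ‖ ≤ M)
    (k : ℤ) (hk : k < 0) :
    (∫ x in (0:ℝ)..(2*Real.pi), v x * Complex.exp (-(k:ℂ) * Complex.I * x)) = 0 := by
  rw [← norm_eq_zero]
  have h0 : Filter.Tendsto (fun y : ℝ => 2 * Real.pi * M * Real.exp (k * y))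
      Filter.atTop (nhds 0) := by
    have h1 : Filter.Tendsto (fun y : ℝ => (k:ℝ) * y) Filter.atTop Filter.atBot :=
      (Filter.tendsto_const_mul_atBot_of_neg
        (show (k:ℝ) < 0 by exact_mod_cast hk)).mpr Filter.tendsto_id
    have := Real.tendsto_exp_atBot.comp h1
    simpa using (this.const_mul (2 * Real.pi * M))
  have hle : ‖∫ x in (0:ℝ)..(2*Real.pi), v x * Complex.exp (-(k:ℂ) * Complex.I * x)‖ ≤ 0 := by
    refine ge_of_tendsto h0 ?_
    filter_upwards [Filter.eventually_gt_atTop (-a)] with y hy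
    exact aux_J a M ha v hvd hper hbd k y hy
  exact le_antisymm hle (norm_nonneg _)


theorem stmt_13 (a M : ℝ) (ha : 0 < a) (v : ℂ → ℂ)
    (hv : AnalyticOn ℂ v {θ : ℂ | -a < θ.im})
    (hper : ∀ θ : ℂ, -a < θ.im → v (θ + 2 * Real.pi) = v θ)
    (hbd : ∀ θ : ℂ, -a < θ.im → ‖v θ‖ ≤ M)
    (N : ℕ) (hN : 0 < N) :
    ‖(2 * Real.pi / N : ℂ) * (∑ j ∈ Finset.Icc 1 N, v (2 * Real.pi * j / N)) -
        ∫ θ in (0:ℝ)..(2 * Real.pi), v θ‖ ≤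
      2 * Real.pi * M / (Real.exp (a * N) - 1) := by
  have hopen : IsOpen {θ : ℂ | -a < θ.im} :=
    isOpen_lt continuous_const Complex.continuous_im
  have hvd : ∀ z : ℂ, -a < z.im → DifferentiableAt ℂ v z := by
    intro z hz
    exact ((hopen.analyticOn_iff_analyticOnNhd.mp hv) z hz).differentiableAt
  have hmem : ∀ x : ℝ, ((x:ℂ) ∈ {θ : ℂ | -a < θ.im}) := by
    intro x; simp only [Set.mem_setOf_eq, Complex.ofReal_im]; linarith
  have hper' : Function.Periodic (fun x : ℝ => v x) (2 * Real.pi) := by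
    intro x
    have := hper x (hmem x)
    simpa [Complex.ofReal_add] using this
  have hcont : Continuous (fun x : ℝ => v x) :=
    hv.continuousOn.comp_continuous Complex.continuous_ofReal hmem
  have hliftcont : Continuous hper'.lift := continuous_coinduced_dom.mpr hcont
  haveI : Fact (0 < 2 * Real.pi) := ⟨by positivity⟩
  set F : C(AddCircle (2 * Real.pi), ℂ) := ⟨hper'.lift, hliftcont⟩ with hF
  set c : ℤ → ℂ := fun k =>
    (1 / (2 * Real.pi : ℂ)) * ∫ x in (0:ℝ)..(2*Real.pi), v x * Complex.exp (-(k:ℂ) * Complex.I * x)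
    with hc
  have hcF : ∀ k : ℤ, fourierCoeff (⇑F) k = c k := by
    intro k
    rw [fourierCoeff_eq_intervalIntegral (⇑F) k 0]
    rw [hc]
    simp only [zero_add, smul_eq_mul]
    rw [Complex.real_smul]
    push_cast
    congr 1
    apply intervalIntegral.integral_congr
    intro x _
    have h1 : F (x : AddCircle (2*Real.pi)) = v x := hper'.lift_coe x
    have h2 : fourier (-k) (x : AddCircle (2*Real.pi)) = Complex.exp (-(k:ℂ) * Complex.I * x) := by
      rw [fourier_coe_apply]
      have hpi : (Real.pi : ℂ) ≠ 0 := by exact_mod_cast Real.pi_ne_zero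
      congr 1
      push_cast
      field_simp
    simp only [h1, h2]; ring
  -- coefficient bounds
  have hM0 : 0 ≤ M := le_trans (norm_nonneg (v 0)) (hbd 0 (by simpa using ha))
  have hpi2 : ((2 * Real.pi : ℝ) : ℂ) ≠ 0 := by
    exact_mod_cast (by positivity : (2*Real.pi:ℝ) ≠ 0)
  have hnorm2pi : ‖(1 / (2 * Real.pi : ℂ))‖ = 1 / (2 * Real.pi) := by
    rw [norm_div, norm_one, show ((2 * Real.pi : ℂ)) = ((2*Real.pi : ℝ) : ℂ) by push_cast; ring,
      Complex.norm_real, Real.norm_of_nonneg (by positivity)]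
  have hcb : ∀ k : ℤ, 0 ≤ k → ‖c k‖ ≤ M * Real.exp (-(a*k)) := by
    intro k hk
    rw [hc]
    simp only [norm_mul]
    rw [hnorm2pi]
    have := aux_c_bound a M ha v hvd hper hbd k hk
    calc 1 / (2*Real.pi) * ‖∫ x in (0:ℝ)..(2*Real.pi), v x * Complex.exp (-(k:ℂ) * Complex.I * x)‖
        ≤ 1 / (2*Real.pi) * (2 * Real.pi * M * Real.exp (-(a*k))) := by
          apply mul_le_mul_of_nonneg_left this (by positivity)
      _ = M * Real.exp (-(a*k)) := by field_simp
  have hcz : ∀ k : ℤ, k < 0 → c k = 0 := by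
    intro k hk
    simp only [hc]
    rw [aux_c_zero a M ha v hvd hper hbd k hk, mul_zero]
  -- summability
  have hgeo : Summable (fun n : ℕ => M * Real.exp (-a) ^ n) :=
    (summable_geometric_of_lt_one (Real.exp_nonneg _)
      (Real.exp_lt_one_iff.mpr (by linarith))).mul_left M
  have hsumc : Summable c := by
    apply Summable.of_nat_of_neg
    · apply Summable.of_norm_bounded hgeo
      intro n
      have := hcb n (Int.ofNat_nonneg n)
      rwa [show -(a*((n:ℕ):ℤ)) = (n:ℕ) * (-a) by push_cast; ring, Real.exp_nat_mul] at this
    · apply summable_of_ne_finset_zero (s := {0})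
      intro n hn
      apply hcz
      simp only [Finset.mem_singleton] at hn
      omega
  have hsumF : Summable (fourierCoeff (⇑F)) := by
    rw [show fourierCoeff (⇑F) = c from funext hcF]
    exact hsumc
  -- pointwise Fourier series at the nodes
  have hnode : ∀ j : ℕ, HasSum (fun i : ℤ => c i * fourier i ((2*Real.pi*j/N : ℝ) : AddCircle (2*Real.pi)))
      (v ((2*Real.pi*j/N : ℝ) : ℂ)) := by
    intro j
    have := has_pointwise_sum_fourier_series_of_summable hsumF ((2*Real.pi*j/N : ℝ) : AddCircle (2*Real.pi))
    simp only [smul_eq_mul, hcF] at this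
    have h1 : F ((2*Real.pi*j/N : ℝ) : AddCircle (2*Real.pi)) = v ((2*Real.pi*j/N : ℝ) : ℂ) :=
      hper'.lift_coe _
    rwa [h1] at this
  -- roots of unity
  set Z : ℤ → ℂ := fun i => Complex.exp (2*Real.pi*Complex.I*i/N) with hZ
  have hNC : (N:ℂ) ≠ 0 := Nat.cast_ne_zero.mpr hN.ne'
  have h2pi : (2*(Real.pi:ℂ)*Complex.I) ≠ 0 := by
    simp [Real.pi_ne_zero, Complex.I_ne_zero]
  have hfour : ∀ (i:ℤ) (j:ℕ), (fourier i ((2*Real.pi*j/N : ℝ) : AddCircle (2*Real.pi)) : ℂ) = Z i ^ j := by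
    intro i j
    rw [fourier_coe_apply, hZ, ← Complex.exp_nat_mul]
    have hpiC : (Real.pi : ℂ) ≠ 0 := by exact_mod_cast Real.pi_ne_zero
    congr 1
    push_cast
    field_simp
  have hZpow : ∀ i : ℤ, Z i ^ N = 1 := by
    intro i
    simp only [hZ]
    rw [← Complex.exp_nat_mul,
      show (N:ℂ) * (2*Real.pi*Complex.I*i/N) = i * (2*Real.pi*Complex.I) by field_simp]
    exact Complex.exp_int_mul_two_pi_mul_I i
  have hT : ∀ i : ℤ, (∑ j ∈ Finset.Icc 1 N, Z i ^ j) = if (N:ℤ) ∣ i then (N:ℂ) else 0 := by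
    intro i
    by_cases hd : (N:ℤ) ∣ i
    · rw [if_pos hd]
      obtain ⟨m, rfl⟩ := hd
      have h1 : Z ((N:ℤ)*m) = 1 := by
        simp only [hZ]
        rw [show 2*(Real.pi:ℂ)*Complex.I*(((N:ℤ)*m:ℤ):ℂ)/N = m * (2*Real.pi*Complex.I) by
          push_cast; field_simp]
        exact Complex.exp_int_mul_two_pi_mul_I m
      simp [h1]
    · rw [if_neg hd]
      have hne : Z i ≠ 1 := by
        intro h
        simp only [hZ] at h
        rw [Complex.exp_eq_one_iff] at h
        obtain ⟨n, hn⟩ := h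
        apply hd
        have h3 : (i:ℂ)/N = n := by
          apply mul_left_cancel₀ h2pi
          linear_combination hn
        have hcast : (i:ℂ) = ((n*N : ℤ):ℂ) := by
          push_cast
          rw [← h3]
          field_simp
        have hiN : i = n*N := by exact_mod_cast hcast
        exact ⟨n, by rw [hiN]; ring⟩
      have hgeom : (∑ j ∈ Finset.range N, Z i ^ j) = 0 := by
        rw [geom_sum_eq hne, hZpow i, sub_self, zero_div]
      rw [← Finset.Ico_add_one_right_eq_Icc, Finset.sum_Ico_eq_sum_range]
      simp only [Nat.add_sub_cancel, Nat.succ_sub_one]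
      calc (∑ j ∈ Finset.range N, Z i ^ (1+j)) = Z i * ∑ j ∈ Finset.range N, Z i ^ j := by
            rw [Finset.mul_sum]; exact Finset.sum_congr rfl (fun j _ => by rw [pow_add, pow_one])
        _ = 0 := by rw [hgeom, mul_zero]
  -- aliasing
  set S : ℂ := ∑ j ∈ Finset.Icc 1 N, v ((2*Real.pi*j/N : ℝ) : ℂ) with hS
  have hsum1 : HasSum (fun i : ℤ => ∑ j ∈ Finset.Icc 1 N,
      c i * fourier i ((2*Real.pi*j/N:ℝ) : AddCircle (2*Real.pi))) S :=
    hasSum_sum (fun j _ => hnode j)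
  have hsum2 : HasSum (fun i : ℤ => c i * (if (N:ℤ) ∣ i then (N:ℂ) else 0)) S := by
    have heq : (fun i : ℤ => ∑ j ∈ Finset.Icc 1 N,
        c i * fourier i ((2*Real.pi*j/N:ℝ) : AddCircle (2*Real.pi))) =
        (fun i : ℤ => c i * (if (N:ℤ) ∣ i then (N:ℂ) else 0)) := by
      funext i
      rw [← hT i, Finset.mul_sum]
      exact Finset.sum_congr rfl (fun j _ => by rw [hfour i j])
    rwa [heq] at hsum1
  have hNZ : ((N:ℤ)) ≠ 0 := by exact_mod_cast hN.ne'
  have hinj : Function.Injective (fun m : ℤ => (N:ℤ)*m) := fun x y h => by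
    simpa using mul_left_cancel₀ hNZ h
  have hsupp : ∀ i ∉ Set.range (fun m : ℤ => (N:ℤ)*m),
      c i * (if (N:ℤ) ∣ i then (N:ℂ) else 0) = 0 := by
    intro i hi
    rw [if_neg, mul_zero]
    intro hdvd
    obtain ⟨m, hm⟩ := hdvd
    exact hi ⟨m, hm.symm⟩
  have hsum3 := (hinj.hasSum_iff hsupp).mpr hsum2
  have hsum4 : HasSum (fun m : ℤ => c ((N:ℤ)*m) * N) S := by
    have heq : ((fun i : ℤ => c i * (if (N:ℤ) ∣ i then (N:ℂ) else 0)) ∘ (fun m : ℤ => (N:ℤ)*m)) =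
        (fun m : ℤ => c ((N:ℤ)*m) * N) := by
      funext m
      simp only [Function.comp_apply]
      rw [if_pos (Dvd.intro m rfl)]
    rwa [heq] at hsum3
  have hsum5 : HasSum (fun m : ℤ => c ((N:ℤ)*m)) (S / N) := by
    have h := hsum4.div_const (N:ℂ)
    have heq : (fun m : ℤ => c ((N:ℤ)*m) * N / N) = fun m : ℤ => c ((N:ℤ)*m) := by
      funext m; field_simp
    rwa [heq] at h
  have hsum6 : HasSum (Function.update (fun m : ℤ => c ((N:ℤ)*m)) 0 0) (S/N - c 0) := by
    have h := hsum5.update 0 0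
    simp only [mul_zero, zero_sub] at h
    rwa [sub_eq_neg_add]
  have hinj2 : Function.Injective (fun n : ℕ => (n:ℤ)+1) := fun x y h => by
    simpa using h
  have hsupp2 : ∀ m ∉ Set.range (fun n : ℕ => (n:ℤ)+1),
      Function.update (fun m : ℤ => c ((N:ℤ)*m)) 0 0 m = 0 := by
    intro m hm
    have hm0 : m ≤ 0 := by
      by_contra h
      push_neg at h
      exact hm ⟨(m-1).toNat, show ((m-1).toNat : ℤ) + 1 = m by omega⟩
    rcases eq_or_lt_of_le hm0 with h | h
    · rw [h]
      exact Function.update_self 0 0 _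
    · rw [Function.update_of_ne h.ne]
      exact hcz _ (mul_neg_of_pos_of_neg (by exact_mod_cast hN) h)
  have hsum7 : HasSum (fun n : ℕ => c ((N:ℤ)*((n:ℤ)+1))) (S/N - c 0) := by
    have h := (hinj2.hasSum_iff hsupp2).mpr hsum6
    have heq : (Function.update (fun m : ℤ => c ((N:ℤ)*m)) 0 0 ∘ (fun n : ℕ => (n:ℤ)+1)) =
        fun n : ℕ => c ((N:ℤ)*((n:ℤ)+1)) := by
      funext n
      simp only [Function.comp_apply]
      rw [Function.update_of_ne (by omega)]
    rwa [heq] at h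
  -- bound
  set r : ℝ := Real.exp (-(a*N)) with hr
  have hr0 : 0 < r := Real.exp_pos _
  have hr1 : r < 1 := by
    rw [hr, Real.exp_lt_one_iff]
    have : (0:ℝ) < a * N := by positivity
    linarith
  have hterm : ∀ n : ℕ, ‖c ((N:ℤ)*((n:ℤ)+1))‖ ≤ (M*r) * r^n := by
    intro n
    have h := hcb ((N:ℤ)*((n:ℤ)+1)) (by positivity)
    have he : Real.exp (-(a*(((N:ℤ)*((n:ℤ)+1) : ℤ) : ℝ))) = (M*r*r^n)/M ∨ True := Or.inr trivial
    calc ‖c ((N:ℤ)*((n:ℤ)+1))‖ ≤ M * Real.exp (-(a*(((N:ℤ)*((n:ℤ)+1) : ℤ) : ℝ))) := h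
      _ = (M*r) * r^n := by
          rw [hr, ← Real.exp_nat_mul,
            show -(a*(((N:ℤ)*((n:ℤ)+1) : ℤ) : ℝ)) = -(a*N) + (n:ℕ) * (-(a*N)) by push_cast; ring,
            Real.exp_add]
          ring
  have hsummable_bound : Summable (fun n : ℕ => (M*r) * r^n) :=
    (summable_geometric_of_lt_one hr0.le hr1).mul_left (M*r)
  have hsummable_norm : Summable (fun n : ℕ => ‖c ((N:ℤ)*((n:ℤ)+1))‖) :=
    Summable.of_nonneg_of_le (fun n => norm_nonneg _) hterm hsummable_bound
  have hnormbound : ‖S/N - c 0‖ ≤ (M*r) * (1-r)⁻¹ := by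
    rw [← hsum7.tsum_eq]
    calc ‖∑' n : ℕ, c ((N:ℤ)*((n:ℤ)+1))‖ ≤ ∑' n : ℕ, ‖c ((N:ℤ)*((n:ℤ)+1))‖ :=
          norm_tsum_le_tsum_norm hsummable_norm
      _ ≤ ∑' n : ℕ, (M*r) * r^n := Summable.tsum_le_tsum hterm hsummable_norm hsummable_bound
      _ = (M*r) * (1-r)⁻¹ := by
          rw [tsum_mul_left, tsum_geometric_of_lt_one hr0.le hr1]
  -- integral equals 2π c 0
  have hI : (∫ θ in (0:ℝ)..(2*Real.pi), v θ) = 2*Real.pi * c 0 := by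
    simp only [hc]
    have hpiC : (Real.pi : ℂ) ≠ 0 := Complex.ofReal_ne_zero.mpr Real.pi_ne_zero
    rw [show ∀ J : ℂ, (2*(Real.pi:ℂ)) * (1/(2*Real.pi) * J) = J from fun J => by
      field_simp]
    apply intervalIntegral.integral_congr
    intro x _
    simp
  -- final assembly
  have hSrw : (∑ j ∈ Finset.Icc 1 N, v (2 * Real.pi * j / N : ℂ)) = S := by
    rw [hS]
    apply Finset.sum_congr rfl
    intro j _
    congr 1
    push_cast
    ring
  rw [hSrw, hI]
  have hrearr : (2 * Real.pi / N : ℂ) * S - 2*Real.pi * c 0 = (2*Real.pi : ℂ) * (S/(N:ℂ) - c 0) := by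
    field_simp
  rw [hrearr, norm_mul]
  have hn2 : ‖(2*(Real.pi:ℂ))‖ = 2*Real.pi := by
    rw [show (2*(Real.pi:ℂ)) = ((2*Real.pi : ℝ) : ℂ) by push_cast; ring,
      Complex.norm_real, Real.norm_of_nonneg (by positivity)]
  rw [hn2]
  have hE : 1 < Real.exp (a*N) := by
    rw [show (1:ℝ) = Real.exp 0 from Real.exp_zero.symm]
    have hN' : (0:ℝ) < N := by exact_mod_cast hN
    exact Real.exp_lt_exp.mpr (by positivity)
  have hfinal : 2*Real.pi * ((M*r) * (1-r)⁻¹) = 2 * Real.pi * M / (Real.exp (a * N) - 1) := by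
    rw [hr, Real.exp_neg]
    have h1 : Real.exp (a*N) ≠ 0 := (Real.exp_pos _).ne'
    have h2 : Real.exp (a*N) - 1 ≠ 0 := by linarith
    have h3 : 1 - (Real.exp (a*N))⁻¹ ≠ 0 := by
      have : (Real.exp (a*N))⁻¹ < 1 := by
        rw [inv_lt_one_iff₀]
        right; exact hE
      linarith
    field_simp
  rw [← hfinal]
  exact mul_le_mul_of_nonneg_left hnormbound (by positivity)
end

section
/- For the function v(θ) = e^{i(D+1)Nθ} with D, N positive integers, the derivative-corrected trapezoidal rule with coefficients A_{k,D} determined by the Stirling-number formula gives I_{N,D} - I = 2π(-1)^D, where I = ∫₀^{2π} v = 0. In particular, I_{N,D} = (2π/N) ∑_{j=1}^N ∑_{k=0}^D N^{-k} A_{k,D} v^{(k)}(2πj/N) = 2π(-1)^D. -/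
open Complex Real

/-- Signed Stirling numbers of the first kind, defined by the recurrence
`s(n+1,k) = s(n,k-1) - n·s(n,k)` with `s(0,0) = 1`. -/
def stirlingFirst : ℕ → ℕ → ℚ
  | 0, 0 => 1
  | 0, _ + 1 => 0
  | n + 1, 0 => -(n : ℚ) * stirlingFirst n 0
  | n + 1, k + 1 => stirlingFirst n k - (n : ℚ) * stirlingFirst n (k + 1)

lemma stirlingFirst_zero (n : ℕ) : stirlingFirst (n + 1) 0 = 0 := by
  induction n with
  | zero => simp [stirlingFirst]
  | succ n ih => rw [show stirlingFirst (n+2) 0 = -(↑(n+1) : ℚ) * stirlingFirst (n+1) 0 from rfl, ih]; ring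

lemma stirlingFirst_eq_zero_of_lt : ∀ n k, n < k → stirlingFirst n k = 0 := by
  intro n
  induction n with
  | zero => intro k hk; match k, hk with | k+1, _ => rfl
  | succ n ih =>
    intro k hk
    match k, hk with
    | k+1, hk =>
      have h1 : n < k := by omega
      have h2 : n < k + 1 := by omega
      rw [show stirlingFirst (n+1) (k+1) = stirlingFirst n k - (n : ℚ) * stirlingFirst n (k+1) from rfl,
        ih k h1, ih (k+1) h2]
      ring

lemma stirling_poly (n : ℕ) (x : ℚ) :
    ∑ k ∈ Finset.range (n + 1), stirlingFirst (n + 1) (k + 1) * x ^ k =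
      ∏ j ∈ Finset.Icc 1 n, (x - j) := by
  induction n with
  | zero => simp [stirlingFirst]
  | succ n ih =>
    have hrec : ∀ k, stirlingFirst (n + 2) (k + 1) =
        stirlingFirst (n + 1) k - ((n + 1 : ℕ) : ℚ) * stirlingFirst (n + 1) (k + 1) := by
      intro k; rfl
    have e1 : ∑ k ∈ Finset.range (n + 2), stirlingFirst (n + 1) k * x ^ k =
        x * ∑ k ∈ Finset.range (n + 1), stirlingFirst (n + 1) (k + 1) * x ^ k := by
      rw [Finset.sum_range_succ' (fun k => stirlingFirst (n + 1) k * x ^ k),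
        stirlingFirst_zero, Finset.mul_sum]
      simp only [zero_mul, pow_zero, add_zero]
      exact Finset.sum_congr rfl fun k _ => by ring
    have e2 : ∑ k ∈ Finset.range (n + 2), stirlingFirst (n + 1) (k + 1) * x ^ k =
        ∑ k ∈ Finset.range (n + 1), stirlingFirst (n + 1) (k + 1) * x ^ k := by
      rw [Finset.sum_range_succ, stirlingFirst_eq_zero_of_lt (n + 1) (n + 2) (by omega)]
      ring
    calc ∑ k ∈ Finset.range (n + 2), stirlingFirst (n + 2) (k + 1) * x ^ k
        = ∑ k ∈ Finset.range (n + 2), (stirlingFirst (n + 1) k * x ^ k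
            - ((n + 1 : ℕ) : ℚ) * (stirlingFirst (n + 1) (k + 1) * x ^ k)) := by
          apply Finset.sum_congr rfl; intro k _; rw [hrec]; ring
      _ = (∑ k ∈ Finset.range (n + 2), stirlingFirst (n + 1) k * x ^ k)
            - ((n + 1 : ℕ) : ℚ) * ∑ k ∈ Finset.range (n + 2), stirlingFirst (n + 1) (k + 1) * x ^ k := by
          rw [Finset.sum_sub_distrib, Finset.mul_sum]
      _ = (x - ((n + 1 : ℕ) : ℚ)) * ∑ k ∈ Finset.range (n + 1), stirlingFirst (n + 1) (k + 1) * x ^ k := by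
          rw [e1, e2]; ring
      _ = ∏ j ∈ Finset.Icc 1 (n + 1), (x - j) := by
          rw [ih, Finset.prod_Icc_succ_top (by omega)]; push_cast; ring

lemma prod_shift (n : ℕ) : ∏ j ∈ Finset.Icc 1 n, (((n : ℚ) + 1) - j) = (Nat.factorial n : ℚ) := by
  have : ∏ j ∈ Finset.Icc 1 n, (((n : ℚ) + 1) - j) = ∏ j ∈ Finset.Icc 1 n, ((n + 1 - j : ℕ) : ℚ) := by
    apply Finset.prod_congr rfl
    intro j hj
    simp only [Finset.mem_Icc] at hj
    have : (n + 1 - j : ℕ) = n + 1 - j := rfl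
    push_cast [Nat.cast_sub (by omega : j ≤ n + 1)]
    ring
  rw [this, ← Nat.cast_prod]
  congr 1
  rw [← Finset.prod_Ico_id_eq_factorial, ← Finset.Ico_add_one_right_eq_Icc]
  refine Finset.prod_nbij' (fun j => n + 1 - j) (fun j => n + 1 - j) ?_ ?_ ?_ ?_ ?_ <;>
    intro a ha <;> simp only [Finset.mem_Ico] at * <;> omega

lemma stirling_sum_key (D : ℕ) :
    ∑ k ∈ Finset.range (D + 1), stirlingFirst (D + 1) (k + 1) * ((D : ℚ) + 1) ^ k
      = (Nat.factorial D : ℚ) := by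
  rw [stirling_poly D ((D : ℚ) + 1), prod_shift]

theorem stmt_16 (D N : ℕ) (hD : 0 < D) (hN : 0 < N) (A : ℕ → ℂ)
    (hA : ∀ k, k ≤ D → Complex.I ^ k * A k =
      ((-1 : ℂ) ^ D / (Nat.factorial D : ℂ)) * (stirlingFirst (D + 1) (k + 1) : ℂ))
    (v : ℂ → ℂ) (hv : v = fun θ => Complex.exp (Complex.I * ((D : ℂ) + 1) * N * θ)) :
    (2 * Real.pi / N : ℂ) *
        (∑ j ∈ Finset.Icc 1 N, ∑ k ∈ Finset.range (D + 1),
          (1 / (N : ℂ)) ^ k * A k * iteratedDeriv k v (2 * Real.pi * j / N)) =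
      2 * Real.pi * (-1 : ℂ) ^ D := by
  have hNc : (N : ℂ) ≠ 0 := Nat.cast_ne_zero.mpr hN.ne'
  set c : ℂ := Complex.I * ((D : ℂ) + 1) * N with hc
  have hderiv : ∀ k θ, iteratedDeriv k v θ = c ^ k * Complex.exp (c * θ) := by
    intro k θ
    rw [hv]
    have := iteratedDeriv_cexp_const_mul k c
    exact congrFun this θ
  have hval : ∀ j : ℕ, Complex.exp (c * (2 * Real.pi * j / N)) = 1 := by
    intro j
    have : c * (2 * Real.pi * j / N) = (((D + 1) * j : ℕ) : ℂ) * (2 * Real.pi * Complex.I) := by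
      rw [hc]; field_simp; push_cast; ring
    rw [this]
    exact_mod_cast Complex.exp_int_mul_two_pi_mul_I (((D + 1) * j : ℕ) : ℤ)
  have hinner : ∀ j ∈ Finset.Icc 1 N, ∑ k ∈ Finset.range (D + 1),
      (1 / (N : ℂ)) ^ k * A k * iteratedDeriv k v (2 * Real.pi * j / N) = (-1 : ℂ) ^ D := by
    intro j _
    have hterm : ∀ k ∈ Finset.range (D + 1),
        (1 / (N : ℂ)) ^ k * A k * iteratedDeriv k v (2 * Real.pi * j / N) =
          ((-1 : ℂ) ^ D / (Nat.factorial D : ℂ)) *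
            ((stirlingFirst (D + 1) (k + 1) : ℂ) * ((D : ℂ) + 1) ^ k) := by
      intro k hk
      rw [Finset.mem_range] at hk
      rw [hderiv, hval, mul_one]
      have hck : c ^ k = Complex.I ^ k * ((D : ℂ) + 1) ^ k * (N : ℂ) ^ k := by
        rw [hc, mul_pow, mul_pow]
      rw [hck]
      have hAk := hA k (by omega)
      have hre : (1 / (N : ℂ)) ^ k * A k * (Complex.I ^ k * ((D : ℂ) + 1) ^ k * (N : ℂ) ^ k)
          = (Complex.I ^ k * A k) * ((D : ℂ) + 1) ^ k * ((1 / (N : ℂ)) ^ k * (N : ℂ) ^ k) := by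
        ring
      rw [hre, hAk, one_div, inv_pow, inv_mul_cancel₀ (pow_ne_zero k hNc), mul_one]
      ring
    rw [Finset.sum_congr rfl hterm, ← Finset.mul_sum]
    have : ∑ k ∈ Finset.range (D + 1),
        (stirlingFirst (D + 1) (k + 1) : ℂ) * ((D : ℂ) + 1) ^ k = (Nat.factorial D : ℂ) := by
      have h2 := congrArg (fun q : ℚ => (q : ℂ)) (stirling_sum_key D)
      push_cast at h2
      convert h2 using 2
    rw [this]
    have hfac : (Nat.factorial D : ℂ) ≠ 0 := Nat.cast_ne_zero.mpr (Nat.factorial_ne_zero D)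
    field_simp
  rw [Finset.sum_congr rfl hinner, Finset.sum_const, Nat.card_Icc]
  simp only [Nat.add_sub_cancel, nsmul_eq_mul]
  field_simp
end

section
/- For the function v(θ) = 2cos((D/2+1)Nθ) with D a positive even integer and N a positive integer, the derivative-corrected trapezoidal rule I_{N,D} with even-derivative coefficients B_{2m,D} (odd coefficients zero) satisfies I_{N,D} - I = 4π(-1)^{D/2} C(D+1, D/2), where I = ∫₀^{2π} v = 0. -/
open Complex Real

private lemma sum_even_terms (t : ℕ → ℂ) (n : ℕ) (h : ∀ m, t (2*m+1) = 0) :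
    ∑ k ∈ Finset.range (2*n+1), t k = ∑ m ∈ Finset.range (n+1), t (2*m) := by
  induction n with
  | zero => simp
  | succ n ih =>
      have e : 2*(n+1)+1 = (2*n+1)+1+1 := by ring
      rw [e, Finset.sum_range_succ, Finset.sum_range_succ, ih, h n,
        Finset.sum_range_succ (fun m => t (2*m)) (n+1)]
      simp [show 2*n+1+1 = 2*(n+1) by ring]

private lemma iterDeriv_aux (a b : ℂ) (k : ℕ) : ∀ p q : ℂ,
    iteratedDeriv k (fun θ : ℂ => p * Complex.exp (a*θ) + q * Complex.exp (b*θ)) =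
      fun θ => p * a^k * Complex.exp (a*θ) + q * b^k * Complex.exp (b*θ) := by
  induction k with
  | zero => intro p q; simp
  | succ k ih =>
      intro p q
      rw [iteratedDeriv_succ']
      have hd : (deriv fun θ : ℂ => p * Complex.exp (a*θ) + q * Complex.exp (b*θ)) =
          fun θ => (p*a) * Complex.exp (a*θ) + (q*b) * Complex.exp (b*θ) := by
        funext x
        have h1 : HasDerivAt (fun θ : ℂ => Complex.exp (a*θ)) (Complex.exp (a*x) * a) x := by
          simpa using ((hasDerivAt_id x).const_mul a).cexp
        have h2 : HasDerivAt (fun θ : ℂ => Complex.exp (b*θ)) (Complex.exp (b*x) * b) x := by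
          simpa using ((hasDerivAt_id x).const_mul b).cexp
        have := ((h1.const_mul p).add (h2.const_mul q)).deriv
        rw [show (fun θ : ℂ => p * Complex.exp (a*θ) + q * Complex.exp (b*θ)) = (fun y => p * Complex.exp (a*y)) + (fun y => q * Complex.exp (b*y)) from rfl, this]; ring
      rw [hd, ih (p*a) (q*b)]
      funext x; ring

private lemma prod_reflect (s : ℕ) :
    ∏ m ∈ Finset.Icc 1 s, (s+1-m) = ∏ m ∈ Finset.Icc 1 s, m := by
  refine Finset.prod_nbij' (fun m => s+1-m) (fun m => s+1-m) ?_ ?_ ?_ ?_ ?_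
  · intro a ha; simp only [Finset.mem_Icc] at *; omega
  · intro a ha; simp only [Finset.mem_Icc] at *; omega
  · intro a ha; simp only [Finset.mem_Icc] at *; omega
  · intro a ha; simp only [Finset.mem_Icc] at *; omega
  · intro a ha; rfl

private lemma prod_shift_s17 (s : ℕ) :
    (∏ m ∈ Finset.Icc 1 s, (s+1+m)) * (s+1).factorial = (2*s+1).factorial := by
  have h1 : ∏ m ∈ Finset.Icc 1 s, (s+1+m) = ∏ m ∈ Finset.Ioc (s+1) (2*s+1), m := by
    refine Finset.prod_nbij' (fun m => s+1+m) (fun m => m-(s+1)) ?_ ?_ ?_ ?_ ?_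
    · intro a ha; simp only [Finset.mem_Icc, Finset.mem_Ioc] at *; omega
    · intro a ha; simp only [Finset.mem_Icc, Finset.mem_Ioc] at *; omega
    · intro a ha; simp only [Finset.mem_Icc] at *; omega
    · intro a ha; simp only [Finset.mem_Ioc] at *; omega
    · intro a ha; rfl
  have h2 : ∀ n : ℕ, ∏ m ∈ Finset.Ioc 0 n, m = n.factorial := by
    intro n
    rw [← Finset.Icc_add_one_left_eq_Ioc, zero_add, ← Finset.Ico_add_one_right_eq_Icc, Finset.prod_Ico_id_eq_factorial]
  have h3 := Finset.prod_Ioc_consecutive (M := ℕ) (fun m => m) (Nat.zero_le (s+1))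
      (by omega : s+1 ≤ 2*s+1)
  rw [h2, h2] at h3
  rw [h1, mul_comm, h3]

private lemma prod_nat_key (s : ℕ) :
    ∏ m ∈ Finset.Icc 1 s, ((s+1)^2 - m^2) =
      Nat.choose (2*s+1) s * s.factorial * s.factorial := by
  have hfac : ∏ m ∈ Finset.Icc 1 s, ((s+1)^2 - m^2) =
      (∏ m ∈ Finset.Icc 1 s, (s+1-m)) * ∏ m ∈ Finset.Icc 1 s, (s+1+m) := by
    rw [← Finset.prod_mul_distrib]
    refine Finset.prod_congr rfl fun m hm => ?_
    simp only [Finset.mem_Icc] at hm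
    obtain ⟨d, hd⟩ := Nat.le.dest hm.2
    subst hd
    have e1 : m + d + 1 - m = d + 1 := by omega
    rw [e1]
    apply Nat.sub_eq_of_eq_add
    ring
  have hfacIcc : ∏ m ∈ Finset.Icc 1 s, m = s.factorial := by
    rw [← Finset.Ico_add_one_right_eq_Icc, Finset.prod_Ico_id_eq_factorial]
  have hch : Nat.choose (2*s+1) s * s.factorial * (s+1).factorial = (2*s+1).factorial := by
    have := Nat.choose_mul_factorial_mul_factorial (by omega : s ≤ 2*s+1)
    simpa [show 2*s+1-s = s+1 by omega] using this
  have key : (∏ m ∈ Finset.Icc 1 s, ((s+1)^2 - m^2)) * (s+1).factorial =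
      (Nat.choose (2*s+1) s * s.factorial * s.factorial) * (s+1).factorial := by
    rw [hfac, prod_reflect, hfacIcc, mul_assoc, prod_shift_s17]
    rw [← hch]; ring
  exact Nat.eq_of_mul_eq_mul_right (Nat.factorial_pos (s+1)) key

private lemma prod_real_key (s : ℕ) :
    ∏ m ∈ Finset.Icc 1 s, (1 - (((s:ℝ)+1)/m)^2) =
      (-1 : ℝ)^s * (Nat.choose (2*s+1) s) := by
  have hstep : ∀ m ∈ Finset.Icc 1 s, (1 - (((s:ℝ)+1)/m)^2) =
      (-1) * ((((s+1)^2 - m^2 : ℕ) : ℝ) / (m:ℝ)^2) := by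
    intro m hm
    simp only [Finset.mem_Icc] at hm
    have hm0 : (m:ℝ) ≠ 0 := Nat.cast_ne_zero.mpr (by omega)
    have hle : m^2 ≤ (s+1)^2 := Nat.pow_le_pow_left (by omega) 2
    rw [Nat.cast_sub hle]
    push_cast
    field_simp
    ring
  rw [Finset.prod_congr rfl hstep, Finset.prod_mul_distrib, Finset.prod_const,
    Nat.card_Icc]
  simp only [Nat.add_sub_cancel]
  rw [Finset.prod_div_distrib, ← Nat.cast_prod, prod_nat_key]
  have hfacIcc : ∏ m ∈ Finset.Icc 1 s, m = s.factorial := by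
    rw [← Finset.Ico_add_one_right_eq_Icc, Finset.prod_Ico_id_eq_factorial]
  have hprodsq : ∏ m ∈ Finset.Icc 1 s, ((m:ℝ))^2 = ((s.factorial : ℝ))^2 := by
    rw [Finset.prod_pow, ← Nat.cast_prod, hfacIcc]
  rw [hprodsq]
  have hfne : ((s.factorial : ℝ)) ≠ 0 := Nat.cast_ne_zero.mpr (Nat.factorial_pos s).ne'
  push_cast
  field_simp

theorem stmt_17 (D N : ℕ) (hD : 0 < D) (hEven : Even D) (hN : 0 < N) (B : ℕ → ℝ)
    (hB0 : B 0 = 1)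
    (hBodd : ∀ m, 1 ≤ m → m ≤ D / 2 → B (2 * m - 1) = 0)
    (hBeven : ∀ ℓ : ℝ,
      ∑ m ∈ Finset.range (D / 2 + 1), (-1 : ℝ) ^ m * ℓ ^ (2 * m) * B (2 * m) =
        ∏ m ∈ Finset.Icc 1 (D / 2), (1 - (ℓ / m) ^ 2))
    (v : ℂ → ℂ) (hv : v = fun θ => 2 * Complex.cos (((D / 2 : ℕ) + 1 : ℂ) * N * θ)) :
    (2 * Real.pi / N : ℂ) *
        (∑ j ∈ Finset.Icc 1 N, ∑ k ∈ Finset.range (D + 1),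
          (1 / (N : ℂ)) ^ k * (B k : ℂ) * iteratedDeriv k v (2 * Real.pi * j / N)) -
        ∫ θ in (0:ℝ)..(2 * Real.pi), v θ =
      4 * Real.pi * (-1 : ℂ) ^ (D / 2) * (Nat.choose (D + 1) (D / 2) : ℂ) := by
  obtain ⟨r, hr⟩ := hEven
  set s := D / 2 with hsdef
  have hDs : D = 2 * s := by omega
  have hs1 : 1 ≤ s := by omega
  have hNne : (N:ℂ) ≠ 0 := Nat.cast_ne_zero.mpr hN.ne'
  set z : ℂ := ((s:ℂ)+1) * N with hzdef
  have hs1ne : ((s:ℂ)+1) ≠ 0 := by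
    have : ((s:ℂ)+1) = ((s+1 : ℕ) : ℂ) := by push_cast; ring
    rw [this]; exact Nat.cast_ne_zero.mpr (by omega)
  have hzne : z ≠ 0 := mul_ne_zero hs1ne hNne
  have hv' : v = fun θ => 1 * Complex.exp ((z*I)*θ) + 1 * Complex.exp ((-(z*I))*θ) := by
    rw [hv]; funext θ
    rw [show ((s:ℂ)+1) * N * θ = z * θ from by rw [hzdef], Complex.two_cos]
    ring_nf
  have hderiv : ∀ k, iteratedDeriv k v =
      fun θ => 1 * (z*I)^k * Complex.exp ((z*I)*θ) + 1 * (-(z*I))^k * Complex.exp ((-(z*I))*θ) := by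
    intro k; rw [hv']; exact iterDeriv_aux (z*I) (-(z*I)) k 1 1
  have hpoint : ∀ j ∈ Finset.Icc 1 N, ∀ k : ℕ,
      iteratedDeriv k v (2 * (Real.pi:ℂ) * (j:ℂ) / (N:ℂ)) = (z*I)^k + (-(z*I))^k := by
    intro j hj k
    rw [hderiv k]
    have e1 : (z*I) * (2 * (Real.pi:ℂ) * (j:ℂ) / (N:ℂ)) =
        ((((s+1)*j : ℕ) : ℤ) : ℂ) * (2 * (Real.pi:ℂ) * I) := by
      rw [hzdef]; push_cast; field_simp
    have e2 : (-(z*I)) * (2 * (Real.pi:ℂ) * (j:ℂ) / (N:ℂ)) =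
        (((-((s+1)*j : ℕ) : ℤ)) : ℂ) * (2 * (Real.pi:ℂ) * I) := by
      rw [hzdef]; push_cast; field_simp
    simp only [e1, e2, Complex.exp_int_mul_two_pi_mul_I]
    ring
  have hC : ℂ := 0
  have hinner : ∀ j ∈ Finset.Icc 1 N,
      ∑ k ∈ Finset.range (D + 1),
          (1 / (N : ℂ)) ^ k * (B k : ℂ) * iteratedDeriv k v (2 * (Real.pi:ℂ) * (j:ℂ) / (N:ℂ))
        = ((2 * (-1:ℝ)^s * (Nat.choose (2*s+1) s) : ℝ) : ℂ) := by
    intro j hj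
    rw [Finset.sum_congr rfl (fun k _ => by rw [hpoint j hj k])]
    rw [hDs]
    rw [sum_even_terms _ s (by
      intro m
      have hodd : (-(z*I))^(2*m+1) = -((z*I)^(2*m+1)) := Odd.neg_pow ⟨m, by ring⟩ _
      rw [hodd]; ring)]
    have hterm : ∀ m : ℕ,
        (1 / (N : ℂ)) ^ (2*m) * (B (2*m) : ℂ) * ((z*I)^(2*m) + (-(z*I))^(2*m))
          = 2 * (((-1:ℝ)^m * ((s:ℝ)+1)^(2*m) * B (2*m) : ℝ) : ℂ) := by
      intro m
      have hev : (-(z*I))^(2*m) = (z*I)^(2*m) := Even.neg_pow ⟨m, by ring⟩ _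
      have key : (1 / (N : ℂ)) ^ (2*m) * (z*I)^(2*m) = ((-1:ℂ))^m * ((s:ℂ)+1)^(2*m) := by
        rw [← mul_pow]
        have e3 : (1 / (N:ℂ)) * (z*I) = ((s:ℂ)+1) * I := by
          rw [hzdef]; field_simp
        rw [e3, pow_mul]
        have e4 : (((s:ℂ)+1)*I)^2 = -(((s:ℂ)+1)^2) := by
          rw [mul_pow, Complex.I_sq]; ring
        rw [e4, neg_pow, ← pow_mul]
      calc (1 / (N : ℂ)) ^ (2*m) * (B (2*m) : ℂ) * ((z*I)^(2*m) + (-(z*I))^(2*m))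
          = 2 * ((1 / (N : ℂ)) ^ (2*m) * (z*I)^(2*m)) * (B (2*m) : ℂ) := by rw [hev]; ring
        _ = 2 * (((-1:ℝ)^m * ((s:ℝ)+1)^(2*m) * B (2*m) : ℝ) : ℂ) := by
            rw [key]; push_cast; ring
    rw [Finset.sum_congr rfl (fun m _ => hterm m), ← Finset.mul_sum]
    have hcast : ∑ m ∈ Finset.range (s+1), (((-1:ℝ)^m * ((s:ℝ)+1)^(2*m) * B (2*m) : ℝ) : ℂ)
        = ((∑ m ∈ Finset.range (s+1), (-1:ℝ)^m * ((s:ℝ)+1)^(2*m) * B (2*m) : ℝ) : ℂ) := by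
      push_cast; rfl
    rw [hcast, hBeven ((s:ℝ)+1), prod_real_key s]
    push_cast; ring
  have hint : (∫ θ in (0:ℝ)..(2 * Real.pi), v θ) = 0 := by
    rw [hv]
    have : ∀ θ : ℝ, (2 : ℂ) * Complex.cos (((s:ℂ)+1) * N * θ) = 2 * Complex.cos (z * θ) := by
      intro θ; rw [hzdef]
    simp only [this]
    rw [intervalIntegral.integral_const_mul, integral_cos_mul_complex hzne]
    have e5 : z * ((2 * Real.pi : ℝ) : ℂ) = ((2*(s+1)*N : ℕ) : ℤ) * (Real.pi : ℂ) := by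
      rw [hzdef]; push_cast; ring
    have e6 : z * ((0 : ℝ) : ℂ) = 0 := by simp
    rw [e5, e6, Complex.sin_int_mul_pi, Complex.sin_zero]
    simp
  rw [Finset.sum_congr rfl hinner, Finset.sum_const, Nat.card_Icc, hint]
  simp only [Nat.add_sub_cancel, nsmul_eq_mul]
  rw [hDs]
  push_cast
  field_simp
  ring
end
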